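/- In the patient-proposing deferred-acceptance mechanism with n patients and n doctors, truth-telling is a dominant strategy for every patient: no patient can, by reporting a false strict preference list (while all other patients and all doctors report truthfully), obtain a doctor he strictly prefers (under his true preferences) to the doctor he obtains by reporting truthfully. -/

import Mathlib

/-- State of the patient-proposing deferred-acceptance (Gale–Shapley) algorithm:
`tent d` is the patient tentatively held by doctor `d` (if any), and
`next p` is the index (in patient `p`'s preference list) of the next doctor
that `p` will propose to. -/
structure GSState (n : ℕ) where
  tent : Fin n → Option (Fin n)
  next : Fin n → ℕ

/-- The set of currently free (unmatched) patients. -/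
def freeSet {n : ℕ} (s : GSState n) : Finset (Fin n) :=
  Finset.univ.filter (fun p => ∀ d, s.tent d ≠ some p)

/-- One step of the algorithm: a free patient proposes to the most preferred
doctor not yet proposed to; the doctor holds the better of the proposer and
the currently held patient (lower `drank` value = more preferred). -/
def gsStep {n : ℕ} (plist : Fin n → ℕ → Fin n) (drank : Fin n → Fin n → ℕ)
    (s : GSState n) : GSState n :=
  if h : (freeSet s).Nonempty then
    let p := (freeSet s).min' h
    let d := plist p (s.next p)
    let next' := Function.update s.next p (s.next p + 1)
    match s.tent d with
    | none => ⟨Function.update s.tent d (some p), next'⟩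
    | some q =>
        if drank d p < drank d q then ⟨Function.update s.tent d (some p), next'⟩
        else ⟨s.tent, next'⟩
  else s

/-- Running the algorithm for a given number of steps from the empty state. -/
def gsRun {n : ℕ} (plist : Fin n → ℕ → Fin n) (drank : Fin n → Fin n → ℕ) :
    ℕ → GSState n
  | 0 => ⟨fun _ => none, fun _ => 0⟩
  | k + 1 => gsStep plist drank (gsRun plist drank k)

/-- The final state of the deferred-acceptance algorithm (it stabilizes after
at most `n * n` proposals). -/
def gsFinal (n : ℕ) (plist : Fin n → ℕ → Fin n) (drank : Fin n → Fin n → ℕ) :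
    GSState n :=
  gsRun plist drank (n * n + 1)

namespace GSAux

variable {n : ℕ}

lemma step_empty (plist : Fin n → ℕ → Fin n) (drank : Fin n → Fin n → ℕ)
    {s : GSState n} (h : ¬ (freeSet s).Nonempty) : gsStep plist drank s = s := by
  unfold gsStep; rw [dif_neg h]

lemma step_spec (plist : Fin n → ℕ → Fin n) (drank : Fin n → Fin n → ℕ)
    {s : GSState n} (h : (freeSet s).Nonempty) :
    ∃ π ∈ freeSet s,
      (gsStep plist drank s).next = Function.update s.next π (s.next π + 1) ∧
      (∀ e, e ≠ plist π (s.next π) → (gsStep plist drank s).tent e = s.tent e) ∧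
      ∃ q, (gsStep plist drank s).tent (plist π (s.next π)) = some q ∧
        drank (plist π (s.next π)) q ≤ drank (plist π (s.next π)) π ∧
        (q = π ∨ s.tent (plist π (s.next π)) = some q) ∧
        ∀ q0, s.tent (plist π (s.next π)) = some q0 →
          drank (plist π (s.next π)) q ≤ drank (plist π (s.next π)) q0 := by
  refine ⟨(freeSet s).min' h, (freeSet s).min'_mem h, ?_⟩
  set π := (freeSet s).min' h with hπ
  set d := plist π (s.next π) with hd
  unfold gsStep
  rw [dif_pos h]
  simp only [← hπ, ← hd]
  split
  · next ht =>
    refine ⟨rfl, fun e he => Function.update_of_ne he _ _,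
      ⟨π, Function.update_self _ _ _, le_refl _, Or.inl rfl, ?_⟩⟩
    intro q0 hq0; rw [ht] at hq0; exact nomatch hq0
  · next q0 ht =>
    split
    · next hlt =>
      refine ⟨rfl, fun e he => Function.update_of_ne he _ _,
        ⟨π, Function.update_self _ _ _, le_refl _, Or.inl rfl, ?_⟩⟩
      intro q1 hq1; rw [ht] at hq1
      obtain rfl : q0 = q1 := by injection hq1
      exact le_of_lt hlt
    · next hlt =>
      refine ⟨rfl, fun e _ => rfl, ⟨q0, ht, not_lt.mp hlt, Or.inr ht, ?_⟩⟩
      intro q1 hq1; rw [ht] at hq1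
      obtain rfl : q0 = q1 := by injection hq1
      exact le_refl _

lemma free_spec {s : GSState n} {p : Fin n} (hp : p ∈ freeSet s) :
    ∀ e, s.tent e ≠ some p := (Finset.mem_filter.mp hp).2

/-- Run invariant. -/
structure GSInv (plist : Fin n → ℕ → Fin n) (drank : Fin n → Fin n → ℕ)
    (s : GSState n) : Prop where
  held : ∀ d p, s.tent d = some p → 0 < s.next p ∧ plist p (s.next p - 1) = d
  nle : ∀ p, s.next p ≤ n
  prop : ∀ p k, k < s.next p →
    ∃ q, s.tent (plist p k) = some q ∧ drank (plist p k) q ≤ drank (plist p k) p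

variable {plist : Fin n → ℕ → Fin n} {drank : Fin n → Fin n → ℕ}

lemma inv_step (hplist : ∀ p, Function.Bijective (fun k : Fin n => plist p (k : ℕ)))
    {s : GSState n} (hI : GSInv plist drank s) : GSInv plist drank (gsStep plist drank s) := by
  by_cases h : (freeSet s).Nonempty
  · obtain ⟨π, hπf, hnext, hother, q, htq, hdq, hqor, hqbest⟩ := step_spec plist drank h
    have hfree := free_spec hπf
    set d := plist π (s.next π) with hd
    set s' := gsStep plist drank s with hs'
    have hlt : s.next π < n := by
      rcases lt_or_eq_of_le (hI.nle π) with h' | h'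
      · exact h'
      · exfalso
        have hall : ∀ e : Fin n, ∃ r, s.tent e = some r := by
          intro e
          obtain ⟨k, hk⟩ := (hplist π).surjective e
          have hk' : plist π (k : ℕ) = e := hk
          obtain ⟨r, hr, _⟩ := hI.prop π (k : ℕ) (by rw [h']; exact k.isLt)
          exact ⟨r, by rwa [hk'] at hr⟩
        choose f hf using hall
        have hinj : Function.Injective f := by
          intro e₁ e₂ he
          obtain ⟨_, h1⟩ := hI.held e₁ (f e₁) (hf e₁)
          obtain ⟨_, h2⟩ := hI.held e₂ (f e₂) (hf e₂)
          rw [← h1, ← h2, he]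
        obtain ⟨e, he⟩ := (Finite.injective_iff_surjective.mp hinj) π
        exact hfree e (by rw [hf e, he])
    have hnextp : ∀ r : Fin n, r ≠ π → s'.next r = s.next r := by
      intro r hr; rw [hnext]; exact Function.update_of_ne hr _ _
    have hnextπ : s'.next π = s.next π + 1 := by rw [hnext]; exact Function.update_self _ _ _
    constructor
    · intro e r hte
      by_cases he : e = d
      · subst he
        rw [htq] at hte
        obtain rfl : q = r := by injection hte
        rcases hqor with hqπ | hq'
        · obtain rfl := hqπ
          rw [hnextπ]
          refine ⟨Nat.succ_pos _, ?_⟩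
          rw [Nat.add_sub_cancel]
        · have hrπ : q ≠ π := fun hrp => hfree d (hrp ▸ hq')
          rw [hnextp q hrπ]; exact hI.held d q hq'
      · rw [hother e he] at hte
        have hrπ : r ≠ π := fun hrp => hfree e (by rw [hte, hrp])
        rw [hnextp r hrπ]; exact hI.held e r hte
    · intro r
      by_cases hr : r = π
      · subst hr; rw [hnextπ]; omega
      · rw [hnextp r hr]; exact hI.nle r
    · intro r k hk
      have key : ∀ k', k' < s.next r → ∃ q', s'.tent (plist r k') = some q' ∧
          drank (plist r k') q' ≤ drank (plist r k') r := by
        intro k' hk'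
        obtain ⟨q0, hq0, hq0le⟩ := hI.prop r k' hk'
        by_cases he : plist r k' = d
        · rw [he] at hq0 hq0le ⊢
          exact ⟨q, htq, le_trans (hqbest q0 hq0) hq0le⟩
        · exact ⟨q0, by rw [hother _ he]; exact hq0, hq0le⟩
      by_cases hr : r = π
      · subst hr
        rw [hnextπ] at hk
        rcases lt_or_eq_of_le (Nat.lt_succ_iff.mp hk) with h' | h'
        · exact key k h'
        · subst h'; exact ⟨q, htq, hdq⟩
      · rw [hnextp r hr] at hk; exact key k hk
  · rw [step_empty plist drank h]; exact hI

lemma inv_run (hplist : ∀ p, Function.Bijective (fun k : Fin n => plist p (k : ℕ))) :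
    ∀ k, GSInv plist drank (gsRun plist drank k)
  | 0 => ⟨fun _ p h => by simp [gsRun] at h, fun _ => Nat.zero_le n,
      fun _ k hk => absurd hk (Nat.not_lt_zero k)⟩
  | (k+1) => inv_step hplist (inv_run hplist k)

lemma next_le_step {s : GSState n} (p : Fin n) :
    s.next p ≤ (gsStep plist drank s).next p := by
  by_cases h : (freeSet s).Nonempty
  · obtain ⟨π, _, hnext, _⟩ := step_spec plist drank h
    rw [hnext, Function.update_apply]
    split
    · next hp => subst hp; omega
    · omega
  · rw [step_empty plist drank h]

lemma next_step_le {s : GSState n} (p : Fin n) :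
    (gsStep plist drank s).next p ≤ s.next p + 1 := by
  by_cases h : (freeSet s).Nonempty
  · obtain ⟨π, _, hnext, _⟩ := step_spec plist drank h
    rw [hnext, Function.update_apply]
    split
    · next hp => subst hp; omega
    · omega
  · rw [step_empty plist drank h]; omega

lemma next_mono {k l : ℕ} (hkl : k ≤ l) (p : Fin n) :
    (gsRun plist drank k).next p ≤ (gsRun plist drank l).next p := by
  induction l, hkl using Nat.le_induction with
  | base => exact le_refl _
  | succ m hm ih => exact le_trans ih (next_le_step p)

lemma tent_persist_step {s : GSState n} {e q : Fin n} (h : s.tent e = some q) :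
    ∃ q', (gsStep plist drank s).tent e = some q' ∧ drank e q' ≤ drank e q := by
  by_cases hne : (freeSet s).Nonempty
  · obtain ⟨π, _, hnext, hother, q1, htq, _, _, hqbest⟩ := step_spec plist drank hne
    by_cases he : e = plist π (s.next π)
    · subst he; exact ⟨q1, htq, hqbest q h⟩
    · exact ⟨q, by rw [hother e he]; exact h, le_refl _⟩
  · rw [step_empty plist drank hne]; exact ⟨q, h, le_refl _⟩

lemma tent_persist {k l : ℕ} (hkl : k ≤ l) {e q : Fin n}
    (h : (gsRun plist drank k).tent e = some q) :
    ∃ q', (gsRun plist drank l).tent e = some q' ∧ drank e q' ≤ drank e q := by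
  induction l, hkl using Nat.le_induction with
  | base => exact ⟨q, h, le_refl _⟩
  | succ m hm ih =>
      obtain ⟨q', hq', hle⟩ := ih
      obtain ⟨q'', hq'', hle'⟩ := tent_persist_step (drank := drank) hq'
      exact ⟨q'', hq'', le_trans hle' hle⟩


lemma plist_inj (hplist : ∀ p, Function.Bijective (fun k : Fin n => plist p (k : ℕ)))
    {p : Fin n} {a b : ℕ} (ha : a < n) (hb : b < n) (h : plist p a = plist p b) : a = b := by
  have := (hplist p).injective (a₁ := ⟨a, ha⟩) (a₂ := ⟨b, hb⟩) (by simpa using h)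
  simpa [Fin.ext_iff] using this

/-- Once a patient has been rejected by a doctor, that doctor never holds him again. -/
lemma rej_mono (hplist : ∀ p, Function.Bijective (fun k : Fin n => plist p (k : ℕ)))
    {k l : ℕ} (hkl : k ≤ l) {p e : Fin n} {j : ℕ}
    (hj : j < (gsRun plist drank k).next p) (hpl : plist p j = e)
    (ht : (gsRun plist drank k).tent e ≠ some p) :
    (gsRun plist drank l).tent e ≠ some p := by
  induction l, hkl using Nat.le_induction with
  | base => exact ht
  | succ m hm ih =>
      intro habs
      set s := gsRun plist drank m with hs
      by_cases hne : (freeSet s).Nonempty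
      · obtain ⟨π, hπf, hnext, hother, q, htq, _, hqor, _⟩ := step_spec plist drank hne
        have hstep : gsRun plist drank (m+1) = gsStep plist drank s := rfl
        rw [hstep] at habs
        by_cases he : e = plist π (s.next π)
        · rw [he, htq] at habs
          have hqp : q = p := by injection habs
          rcases hqor with hqπ | hq'
          · have hπp : π = p := by rw [← hqπ]; exact hqp
            subst hπp
            have hj' : j < s.next π := lt_of_lt_of_le hj (next_mono hm π)
            have hn1 : s.next π + 1 ≤ n := by
              have h2 := (inv_run (drank := drank) hplist (m+1)).nle π
              rw [hstep, hnext, Function.update_self] at h2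
              exact h2
            have := plist_inj hplist (show j < n by omega) (show s.next π < n by omega)
              (by rw [hpl]; exact he)
            omega
          · rw [← he] at hq'
            rw [hqp] at hq'
            exact ih hq'
        · rw [hother e he] at habs
          exact ih habs
      · rw [show gsRun plist drank (m+1) = gsStep plist drank s from rfl,
          step_empty plist drank hne] at habs
        exact ih habs

lemma sum_next_step {s : GSState n} (h : (freeSet s).Nonempty) :
    (∑ p, (gsStep plist drank s).next p) = (∑ p, s.next p) + 1 := by
  obtain ⟨π, _, hnext, _⟩ := step_spec plist drank h
  rw [hnext, Finset.sum_update_of_mem (Finset.mem_univ π)]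
  rw [Finset.sum_eq_sum_sdiff_singleton_add (Finset.mem_univ π) s.next]
  omega

lemma run_absorb {k l : ℕ} (hk : freeSet (gsRun plist drank k) = ∅) (hkl : k ≤ l) :
    gsRun plist drank l = gsRun plist drank k := by
  induction l, hkl using Nat.le_induction with
  | base => rfl
  | succ m hm ih =>
      show gsStep plist drank (gsRun plist drank m) = _
      rw [ih, step_empty]
      rw [hk]; exact fun hne => (Finset.not_nonempty_empty hne)

lemma free_final (hplist : ∀ p, Function.Bijective (fun k : Fin n => plist p (k : ℕ))) :
    freeSet (gsRun plist drank (n * n + 1)) = ∅ := by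
  by_contra hne
  have hne' : ∀ k ≤ n * n + 1, (freeSet (gsRun plist drank k)).Nonempty := by
    intro k hk
    rcases Finset.eq_empty_or_nonempty (freeSet (gsRun plist drank k)) with h | h
    · exact absurd (run_absorb h hk) (fun habs => hne (habs ▸ h))
    · exact h
  have hsum : ∀ k ≤ n * n + 1, k ≤ ∑ p, (gsRun plist drank k).next p := by
    intro k hk
    induction k with
    | zero => omega
    | succ m ih =>
        have h1 := sum_next_step (plist := plist) (drank := drank) (hne' m (by omega))
        have h2 := ih (by omega)
        show m + 1 ≤ ∑ p, (gsStep plist drank (gsRun plist drank m)).next p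
        omega
  have hle : (∑ p, (gsRun plist drank (n*n+1)).next p) ≤ n * n := by
    calc (∑ p, (gsRun plist drank (n*n+1)).next p) ≤ ∑ _p : Fin n, n :=
        Finset.sum_le_sum (fun p _ => (inv_run hplist (n*n+1)).nle p)
      _ = n * n := by simp [Finset.sum_const, mul_comm]
  have := hsum (n*n+1) (le_refl _)
  omega

/-- The final state is a perfect matching. -/
lemma exists_match (hplist : ∀ p, Function.Bijective (fun k : Fin n => plist p (k : ℕ))) :
    ∃ M : Fin n → Fin n,
      (∀ p, (gsRun plist drank (n*n+1)).tent (M p) = some p) ∧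
      (∀ p e, (gsRun plist drank (n*n+1)).tent e = some p → e = M p) ∧
      Function.Bijective M := by
  have hfree := free_final (drank := drank) hplist
  have hex : ∀ p : Fin n, ∃ e, (gsRun plist drank (n*n+1)).tent e = some p := by
    intro p
    have hp : p ∉ freeSet (gsRun plist drank (n*n+1)) := by
      rw [hfree]; exact Finset.notMem_empty p
    rw [freeSet, Finset.mem_filter] at hp
    push_neg at hp
    exact hp (Finset.mem_univ p)
  choose M hM using hex
  have huniq : ∀ p e, (gsRun plist drank (n*n+1)).tent e = some p → e = M p := by
    intro p e he
    obtain ⟨_, h1⟩ := (inv_run hplist (n*n+1)).held e p he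
    obtain ⟨_, h2⟩ := (inv_run hplist (n*n+1)).held (M p) p (hM p)
    rw [← h1, ← h2]
  have hinj : Function.Injective M := by
    intro a b hab
    have h1 := hM a
    rw [hab, hM b] at h1
    injection h1 with h1; exact h1.symm
  exact ⟨M, hM, huniq, hinj, Finite.injective_iff_surjective.mp hinj⟩


lemma prank_eq {prank : Fin n → Fin n → ℕ}
    (hprank : ∀ p (k : Fin n), prank p (plist p (k : ℕ)) = (k : ℕ))
    {p : Fin n} {j : ℕ} (hj : j < n) : prank p (plist p j) = j := by
  have := hprank p ⟨j, hj⟩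
  simpa using this

lemma prank_inj {prank : Fin n → Fin n → ℕ}
    (hplist : ∀ p, Function.Bijective (fun k : Fin n => plist p (k : ℕ)))
    (hprank : ∀ p (k : Fin n), prank p (plist p (k : ℕ)) = (k : ℕ))
    {p : Fin n} {e e' : Fin n} (h : prank p e = prank p e') : e = e' := by
  obtain ⟨a, ha⟩ := (hplist p).surjective e
  obtain ⟨b, hb⟩ := (hplist p).surjective e'
  have ha' : plist p (a : ℕ) = e := ha
  have hb' : plist p (b : ℕ) = e' := hb
  rw [← ha', ← hb', hprank, hprank] at h
  rw [← ha', ← hb', show a = b from Fin.ext h]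

/-- Rank of final partner. -/
lemma match_facts (hplist : ∀ p, Function.Bijective (fun k : Fin n => plist p (k : ℕ)))
    {prank : Fin n → Fin n → ℕ}
    (hprank : ∀ p (k : Fin n), prank p (plist p (k : ℕ)) = (k : ℕ))
    {M : Fin n → Fin n} (hM : ∀ p, (gsRun plist drank (n*n+1)).tent (M p) = some p)
    (p : Fin n) :
    0 < (gsRun plist drank (n*n+1)).next p ∧
    (gsRun plist drank (n*n+1)).next p ≤ n ∧
    plist p ((gsRun plist drank (n*n+1)).next p - 1) = M p ∧
    prank p (M p) = (gsRun plist drank (n*n+1)).next p - 1 := by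
  obtain ⟨h1, h2⟩ := (inv_run hplist (n*n+1)).held (M p) p (hM p)
  have h3 := (inv_run (drank := drank) hplist (n*n+1)).nle p
  have hn : 0 < n := Fin.pos p
  refine ⟨h1, h3, h2, ?_⟩
  rw [← h2, prank_eq hprank (by omega)]

/-- Stability of the final matching (with respect to the ranks used in the run). -/
lemma stable (hplist : ∀ p, Function.Bijective (fun k : Fin n => plist p (k : ℕ)))
    (hdinj : ∀ d, Function.Injective (drank d))
    {prank : Fin n → Fin n → ℕ}
    (hprank : ∀ p (k : Fin n), prank p (plist p (k : ℕ)) = (k : ℕ))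
    {M : Fin n → Fin n} (hM : ∀ p, (gsRun plist drank (n*n+1)).tent (M p) = some p)
    (hMu : ∀ p e, (gsRun plist drank (n*n+1)).tent e = some p → e = M p)
    {p e q : Fin n} (he : prank p e < prank p (M p))
    (hq : (gsRun plist drank (n*n+1)).tent e = some q) :
    drank e q < drank e p := by
  obtain ⟨h1, h2, h3, h4⟩ := match_facts hplist hprank hM p
  obtain ⟨k, hk⟩ := (hplist p).surjective e
  have hk' : plist p (k : ℕ) = e := hk
  have hkr : prank p e = (k : ℕ) := by rw [← hk', hprank]
  have hklt : (k : ℕ) < (gsRun plist drank (n*n+1)).next p := by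
    rw [hkr, h4] at he; omega
  obtain ⟨q', hq', hle⟩ := (inv_run hplist (n*n+1)).prop p (k : ℕ) hklt
  rw [hk'] at hq' hle
  have hqq : q' = q := by rw [hq] at hq'; injection hq' with h; exact h.symm
  subst hqq
  have hqp : q' ≠ p := by
    intro hqp; subst hqp
    have := hMu q' e hq
    subst this
    omega
  exact lt_of_le_of_ne hle (fun hcon => hqp (hdinj e hcon))

lemma exists_trans (P : ℕ → Prop) (h0 : ¬ P 0) {N : ℕ} (hN : P N) :
    ∃ k < N, ¬ P k ∧ P (k + 1) := by
  induction N with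
  | zero => exact absurd hN h0
  | succ m ih =>
      by_cases hm : P m
      · obtain ⟨k, hk1, hk2⟩ := ih hm
        exact ⟨k, by omega, hk2⟩
      · exact ⟨m, by omega, hm, hN⟩

lemma exists_propTime {p : Fin n} {j N : ℕ} (hj : j < (gsRun plist drank N).next p) :
    ∃ k < N, (gsRun plist drank k).next p = j ∧ (gsRun plist drank (k+1)).next p = j + 1 := by
  obtain ⟨k, hkN, hk1, hk2⟩ := exists_trans (fun k => j < (gsRun plist drank k).next p)
    (by show ¬ j < (0:ℕ); omega) hj
  have ha := next_le_step (plist := plist) (drank := drank) (s := gsRun plist drank k) p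
  have hb := next_step_le (plist := plist) (drank := drank) (s := gsRun plist drank k) p
  have hstep : gsRun plist drank (k+1) = gsStep plist drank (gsRun plist drank k) := rfl
  rw [← hstep] at ha hb
  simp only [not_lt] at hk1
  exact ⟨k, hkN, by omega, by omega⟩

lemma proposer_unique {s : GSState n} {p q : Fin n}
    (hp : (gsStep plist drank s).next p ≠ s.next p)
    (hq : (gsStep plist drank s).next q ≠ s.next q) : p = q := by
  by_cases h : (freeSet s).Nonempty
  · obtain ⟨π, _, hnext, _⟩ := step_spec plist drank h
    have key : ∀ r : Fin n, (gsStep plist drank s).next r ≠ s.next r → r = π := by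
      intro r hr
      by_contra hne
      rw [hnext, Function.update_of_ne hne] at hr
      exact hr rfl
    rw [key p hp, key q hq]
  · rw [step_empty plist drank h] at hp
    exact absurd rfl hp

end GSAux

/-- truthfulness for the proposing side. If patient `p0`
misreports his preference list (`plist'`, `prank'`) while everyone else is
truthful, the doctor he obtains under the misreport is not strictly better
(under his true preferences `prank p0`) than the doctor he obtains by
reporting truthfully. -/
theorem gs_truthful (n : ℕ)
    (plist plist' : Fin n → ℕ → Fin n) (prank prank' drank : Fin n → Fin n → ℕ)
    (hplist : ∀ p, Function.Bijective (fun k : Fin n => plist p (k : ℕ)))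
    (hplist' : ∀ p, Function.Bijective (fun k : Fin n => plist' p (k : ℕ)))
    (hprank : ∀ p (k : Fin n), prank p (plist p (k : ℕ)) = (k : ℕ))
    (hprank' : ∀ p (k : Fin n), prank' p (plist' p (k : ℕ)) = (k : ℕ))
    (hdinj : ∀ d, Function.Injective (drank d))
    (p0 : Fin n)
    (hsame : ∀ q, q ≠ p0 → plist' q = plist q)
    (hsame' : ∀ q, q ≠ p0 → prank' q = prank q) :
    ∀ d d' : Fin n,
      (gsFinal n plist drank).tent d = some p0 →
      (gsFinal n plist' drank).tent d' = some p0 →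
      prank p0 d ≤ prank p0 d' := by
  classical
  intro d d' hd hd'
  by_contra hcon
  push_neg at hcon
  have hd0 : (gsRun plist drank (n*n+1)).tent d = some p0 := hd
  have hd'0 : (gsRun plist' drank (n*n+1)).tent d' = some p0 := hd'
  obtain ⟨M, hM, hMu, hMinj, hMsurj⟩ := GSAux.exists_match (drank := drank) hplist
  obtain ⟨M', hM', hMu', hM'inj, hM'surj⟩ := GSAux.exists_match (drank := drank) hplist'
  have hdM : d = M p0 := hMu p0 d hd0
  have hd'M : d' = M' p0 := hMu' p0 d' hd'0
  rw [hdM, hd'M] at hcon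
  set Sfin : Finset (Fin n) :=
    Finset.univ.filter (fun p => prank p (M' p) < prank p (M p)) with hSfin
  have hp0S : p0 ∈ Sfin := Finset.mem_filter.mpr ⟨Finset.mem_univ _, hcon⟩
  -- stability of the misreport run, usable for truthful patients
  have hstab' : ∀ p e q, p ≠ p0 → prank p e < prank p (M' p) →
      (gsRun plist' drank (n*n+1)).tent e = some q → drank e q < drank e p := by
    intro p e q hp he hq
    refine GSAux.stable hplist' hdinj hprank' hM' hMu' ?_ hq
    rw [hsame' p hp]; exact he
  have hstab : ∀ p e q, prank p e < prank p (M p) →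
      (gsRun plist drank (n*n+1)).tent e = some q → drank e q < drank e p :=
    fun p e q he hq => GSAux.stable hplist hdinj hprank hM hMu he hq
  by_cases hc : Sfin.image M' ⊆ Sfin.image M
  · -- Case 2 : M'(S) = M(S); temporal blocking-lemma argument in the true run
    have hcard : (Sfin.image M).card ≤ (Sfin.image M').card := by
      rw [Finset.card_image_of_injective _ hM'inj, Finset.card_image_of_injective _ hMinj]
    have himg : Sfin.image M' = Sfin.image M := Finset.eq_of_subset_of_card_le hc hcard
    -- final proposal times in the true run
    have hex : ∀ p : Fin n, ∃ k, k < n*n+1 ∧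
        (gsRun plist drank k).next p = (gsRun plist drank (n*n+1)).next p - 1 ∧
        (gsRun plist drank (k+1)).next p = (gsRun plist drank (n*n+1)).next p := by
      intro p
      obtain ⟨h1, _, _, _⟩ := GSAux.match_facts hplist hprank hM p
      obtain ⟨k, hk1, hk2, hk3⟩ := GSAux.exists_propTime (plist := plist) (drank := drank)
        (p := p) (N := n*n+1)
        (j := (gsRun plist drank (n*n+1)).next p - 1) (by omega)
      exact ⟨k, hk1, hk2, by omega⟩
    choose T hT1 hT2 hT3 using hex
    obtain ⟨m₁, hm₁S, hmax⟩ := Sfin.exists_max_image T ⟨p0, hp0S⟩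
    obtain ⟨hpos₁, hnle₁, hpl₁, hpr₁⟩ := GSAux.match_facts hplist hprank hM m₁
    -- the doctor w := M m₁ is in M'(S)
    have hwim : M m₁ ∈ Sfin.image M' := by
      rw [himg]; exact Finset.mem_image_of_mem M hm₁S
    obtain ⟨m₂, hm₂S, hm₂w⟩ := Finset.mem_image.mp hwim
    have hm₂S' : prank m₂ (M' m₂) < prank m₂ (M m₂) :=
      (Finset.mem_filter.mp hm₂S).2
    have hm₂m₁ : m₂ ≠ m₁ := by
      intro h; subst h
      rw [hm₂w] at hm₂S'
      exact lt_irrefl _ hm₂S'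
    obtain ⟨hpos₂, hnle₂, hpl₂, hpr₂⟩ := GSAux.match_facts hplist hprank hM m₂
    have hj₂ : prank m₂ (M m₁) < (gsRun plist drank (n*n+1)).next m₂ - 1 := by
      rw [hm₂w] at hm₂S'; omega
    have hplw : plist m₂ (prank m₂ (M m₁)) = M m₁ := by
      obtain ⟨c, hc⟩ := (hplist m₂).surjective (M m₁)
      have hc' : plist m₂ (c : ℕ) = M m₁ := hc
      rw [← hc', hprank]
    obtain ⟨k₂, hk₂N, hk₂a, hk₂b⟩ := GSAux.exists_propTime (plist := plist) (drank := drank)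
      (p := m₂) (N := n*n+1)
      (j := prank m₂ (M m₁)) (by omega)
    obtain ⟨q₂, hq₂, hq₂le⟩ := (GSAux.inv_run hplist (k₂+1)).prop m₂ (prank m₂ (M m₁))
      (by rw [hk₂b]; omega)
    rw [hplw] at hq₂ hq₂le
    have hk₂t : k₂ + 1 ≤ T m₁ := by
      have hmx := hmax m₂ hm₂S
      by_contra hcon2
      push_neg at hcon2
      have hTk : T m₂ ≤ k₂ := by omega
      rcases lt_or_eq_of_le hTk with h | h
      · have := GSAux.next_mono (plist := plist) (drank := drank)
          (show T m₂ + 1 ≤ k₂ by omega) m₂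
        rw [hT3 m₂, hk₂a] at this
        omega
      · have h2 := hT2 m₂
        rw [h, hk₂a] at h2
        omega
    obtain ⟨mb, hmb, hmble⟩ := GSAux.tent_persist (drank := drank) hk₂t hq₂
    have hmbm₂ : drank (M m₁) mb ≤ drank (M m₁) m₂ := le_trans hmble hq₂le
    -- mb ≠ m₁
    have hmbm₁ : mb ≠ m₁ := by
      intro he
      obtain ⟨hp', hpl'⟩ := (GSAux.inv_run hplist (T m₁)).held (M m₁) mb hmb
      rw [he, hT2 m₁] at hp' hpl'
      have := GSAux.plist_inj hplist
        (show (gsRun plist drank (n*n+1)).next m₁ - 1 - 1 < n by omega)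
        (show (gsRun plist drank (n*n+1)).next m₁ - 1 < n by omega)
        (by rw [hpl', hpl₁])
      omega
    -- mb is not in S
    have hmbS : mb ∉ Sfin := by
      intro hin
      have hTle := hmax mb hin
      obtain ⟨hposb, hnleb, hplb, hprb⟩ := GSAux.match_facts hplist hprank hM mb
      have hTne : T mb ≠ T m₁ := by
        intro he
        have h1 : (gsStep plist drank (gsRun plist drank (T m₁))).next mb ≠
            (gsRun plist drank (T m₁)).next mb := by
          show (gsRun plist drank (T m₁ + 1)).next mb ≠ (gsRun plist drank (T m₁)).next mb
          rw [← he, hT2 mb, hT3 mb]; omega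
        have h2 : (gsStep plist drank (gsRun plist drank (T m₁))).next m₁ ≠
            (gsRun plist drank (T m₁)).next m₁ := by
          show (gsRun plist drank (T m₁ + 1)).next m₁ ≠ (gsRun plist drank (T m₁)).next m₁
          rw [hT2 m₁, hT3 m₁]; omega
        exact hmbm₁ (GSAux.proposer_unique h1 h2)
      have hTlt : T mb < T m₁ := lt_of_le_of_ne hTle hTne
      have ha := GSAux.next_mono (plist := plist) (drank := drank)
        (show T mb + 1 ≤ T m₁ by omega) mb
      have hb := GSAux.next_mono (plist := plist) (drank := drank)
        (show T m₁ ≤ n*n+1 from le_of_lt (hT1 m₁)) mb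
      rw [hT3 mb] at ha
      have hfix : (gsRun plist drank (T m₁)).next mb = (gsRun plist drank (n*n+1)).next mb := by
        omega
      obtain ⟨hp', hpl'⟩ := (GSAux.inv_run hplist (T m₁)).held (M m₁) mb hmb
      rw [hfix] at hpl'
      have : M mb = M m₁ := by rw [← hplb, hpl']
      exact hmbm₁ (hMinj this)
    -- rank computations for mb
    obtain ⟨hpmb, hplmb2⟩ := (GSAux.inv_run hplist (T m₁)).held (M m₁) mb hmb
    have hnlemb : (gsRun plist drank (T m₁)).next mb ≤ n :=
      (GSAux.inv_run (drank := drank) hplist (T m₁)).nle mb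
    have hprw : prank mb (M m₁) = (gsRun plist drank (T m₁)).next mb - 1 := by
      rw [← hplmb2, GSAux.prank_eq hprank (by omega)]
    obtain ⟨hposmb, hnmb, hplFmb, hprFmb⟩ := GSAux.match_facts hplist hprank hM mb
    have hmonob := GSAux.next_mono (plist := plist) (drank := drank)
      (show T m₁ ≤ n*n+1 from le_of_lt (hT1 m₁)) mb
    have hMmbw : M mb ≠ M m₁ := fun h => hmbm₁ (hMinj h)
    have hlt1 : prank mb (M m₁) < prank mb (M mb) := by
      rw [hprw, hprFmb]
      rcases lt_or_eq_of_le hmonob with h | h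
      · omega
      · exfalso; apply hMmbw; rw [← hplFmb, ← h, hplmb2]
    have hnotS : ¬ prank mb (M' mb) < prank mb (M mb) := by
      intro h
      exact hmbS (Finset.mem_filter.mpr ⟨Finset.mem_univ _, h⟩)
    have hmbp0 : mb ≠ p0 := fun h => hmbS (h ▸ hp0S)
    have hblock : drank (M m₁) m₂ < drank (M m₁) mb := by
      refine hstab' mb (M m₁) m₂ hmbp0 (by omega) ?_
      rw [← hm₂w]; exact hM' m₂
    omega
  · -- Case 1 : static argument
    obtain ⟨w, hw1, hw2⟩ := Finset.not_subset.mp hc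
    obtain ⟨m, hmS, hmw⟩ := Finset.mem_image.mp hw1
    obtain ⟨m₁, hm₁w⟩ := hMsurj w
    have hm₁S : m₁ ∉ Sfin := fun h => hw2 (Finset.mem_image.mpr ⟨m₁, h, hm₁w⟩)
    have hmS' : prank m (M' m) < prank m (M m) := (Finset.mem_filter.mp hmS).2
    have hm₁S' : ¬ prank m₁ (M' m₁) < prank m₁ (M m₁) := fun h =>
      hm₁S (Finset.mem_filter.mpr ⟨Finset.mem_univ _, h⟩)
    have hm₁m : m₁ ≠ m := by
      intro h
      rw [h] at hm₁S'
      exact hm₁S' hmS'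
    have hb1 : drank w m₁ < drank w m := by
      refine hstab m w m₁ (hmw ▸ hmS') ?_
      rw [← hm₁w]; exact hM m₁
    have hMm₁w : M' m₁ ≠ w := by
      intro h
      rw [← hmw] at h
      exact hm₁m (hM'inj h)
    have hlt2 : prank m₁ w < prank m₁ (M' m₁) := by
      rw [← hm₁w]
      rcases lt_or_eq_of_le (not_lt.mp hm₁S') with h | h
      · exact h
      · exfalso
        have heq : M m₁ = M' m₁ := GSAux.prank_inj hplist hprank h
        exact hMm₁w (by rw [← heq]; exact hm₁w)
    have hm₁p0 : m₁ ≠ p0 := fun h => hm₁S (h ▸ hp0S)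
    have hb2 : drank w m < drank w m₁ := by
      refine hstab' m₁ w m hm₁p0 hlt2 ?_
      rw [← hmw]; exact hM' m
    omega
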